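/- Let F : X → ℝ be a non-decreasing, differentiable, DR-submodular function on a compact rectangle X = ∏_{i=1}^n [ℓ_i, u_i]. Then for every x ∈ X and η ∈ ℝ: η ≤ F(x) if and only if η ≤ F̃(x; x̂) for all x̂ ∈ X. In other words, the hypograph of F equals the set {(η, x) : x ∈ X, η ≤ F̃(x; x̂) ∀ x̂ ∈ X}. -/

import Mathlib

open Set Filter

private lemma line_hasDerivAt {n : ℕ} (F : (Fin n → ℝ) → ℝ) (hdiff : Differentiable ℝ F)
    (w : Fin n → ℝ) (j : Fin n) :
    HasDerivAt (fun t : ℝ => F (w + Pi.single j t)) (fderiv ℝ F w (Pi.single j 1)) 0 := by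
  have h1 : HasDerivAt (fun t : ℝ => w + t • (Pi.single j 1 : Fin n → ℝ))
      (Pi.single j 1 : Fin n → ℝ) 0 := by
    simpa using ((hasDerivAt_id (0:ℝ)).smul_const (Pi.single j 1 : Fin n → ℝ)).const_add w
  have h2 := (hdiff (w + (0:ℝ) • (Pi.single j 1 : Fin n → ℝ))).hasFDerivAt.comp_hasDerivAt 0 h1
  simp only [zero_smul, add_zero] at h2
  have heq : (fun t : ℝ => F (w + Pi.single j t))
      = fun t : ℝ => F (w + t • (Pi.single j 1 : Fin n → ℝ)) := by
    funext t
    congr 1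
    rw [← Pi.single_smul, smul_eq_mul, mul_one]
  rw [heq]
  exact h2

private lemma slope_to_deriv {n : ℕ} (F : (Fin n → ℝ) → ℝ) (hdiff : Differentiable ℝ F)
    (w : Fin n → ℝ) (j : Fin n) :
    Tendsto (fun t : ℝ => (F (w + Pi.single j t) - F w) / t) (nhdsWithin 0 (Set.Ioi 0))
      (nhds (fderiv ℝ F w (Pi.single j 1))) := by
  have h := hasDerivAt_iff_tendsto_slope.1 (line_hasDerivAt F hdiff w j)
  have h' := h.mono_left (nhdsWithin_mono 0 (fun t ht => (ne_of_gt ht : t ≠ 0)))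
  refine h'.congr (fun t => ?_)
  simp [slope_def_field, div_eq_mul_inv, mul_comm]

private lemma grad_antitone {n : ℕ} (ℓ u : Fin n → ℝ)
    (F : (Fin n → ℝ) → ℝ) (hdiff : Differentiable ℝ F)
    (hsub : ∀ x ∈ Set.Icc ℓ u, ∀ y ∈ Set.Icc ℓ u, F (x ⊔ y) + F (x ⊓ y) ≤ F x + F y)
    {a z : Fin n → ℝ} (ha : a ∈ Set.Icc ℓ u) (hz : z ∈ Set.Icc ℓ u)
    (haz : a ≤ z) (j : Fin n) (hja : z j = a j) (hju : a j < u j) :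
    fderiv ℝ F z (Pi.single j 1) ≤ fderiv ℝ F a (Pi.single j 1) := by
  refine le_of_tendsto_of_tendsto (slope_to_deriv F hdiff z j) (slope_to_deriv F hdiff a j) ?_
  have hmem : Set.Ioc (0:ℝ) (u j - a j) ∈ nhdsWithin (0:ℝ) (Set.Ioi 0) :=
    Ioc_mem_nhdsGT_of_mem ⟨le_rfl, sub_pos.2 hju⟩
  filter_upwards [hmem] with t ht
  have ht0 : (0:ℝ) < t := ht.1
  have hadd : ∀ w : Fin n → ℝ, w ∈ Set.Icc ℓ u → w j = a j →
      w + Pi.single j t ∈ Set.Icc ℓ u := by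
    intro w hw hwj
    constructor
    · intro i
      by_cases hij : i = j
      · subst hij
        simp only [Pi.add_apply, Pi.single_eq_same]
        have := hw.1 i
        linarith
      · simpa [Pi.single_apply, hij] using hw.1 i
    · intro i
      by_cases hij : i = j
      · subst hij
        simp only [Pi.add_apply, Pi.single_eq_same]
        rw [hwj]
        linarith [ht.2]
      · simpa [Pi.single_apply, hij] using hw.2 i
  have hat : a + Pi.single j t ∈ Set.Icc ℓ u := hadd a ha rfl
  have key := hsub _ hat _ hz
  have hsup : (a + Pi.single j t) ⊔ z = z + Pi.single j t := by
    funext i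
    by_cases hij : i = j
    · subst hij
      simp only [Pi.sup_apply, Pi.add_apply, Pi.single_eq_same]
      rw [hja]
      exact max_eq_left (by linarith)
    · simp only [Pi.sup_apply, Pi.add_apply, Pi.single_apply, if_neg hij, add_zero]
      exact max_eq_right (haz i)
  have hinf : (a + Pi.single j t) ⊓ z = a := by
    funext i
    by_cases hij : i = j
    · subst hij
      simp only [Pi.inf_apply, Pi.add_apply, Pi.single_eq_same]
      rw [hja]
      exact min_eq_right (by linarith)
    · simp only [Pi.inf_apply, Pi.add_apply, Pi.single_apply, if_neg hij, add_zero]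
      exact min_eq_left (haz i)
  rw [hsup, hinf] at key
  exact (div_le_div_iff_of_pos_right ht0).2 (by linarith)

private lemma concave_bound {g : ℝ → ℝ} {d t : ℝ} (ht0 : 0 < t)
    (hd : Filter.Tendsto (fun s : ℝ => (g s - g 0) / s) (nhdsWithin 0 (Set.Ioi 0)) (nhds d))
    (hcv : ∀ s : ℝ, 0 < s → s ≤ t → (t - s) / t * g 0 + s / t * g t ≤ g s) :
    g t ≤ g 0 + t * d := by
  have key : (g t - g 0) / t ≤ d := by
    refine ge_of_tendsto hd ?_
    have hmem : Set.Ioc (0:ℝ) t ∈ nhdsWithin (0:ℝ) (Set.Ioi 0) :=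
      Ioc_mem_nhdsGT_of_mem ⟨le_rfl, ht0⟩
    filter_upwards [hmem] with s hs
    have hs0 : (0:ℝ) < s := hs.1
    have hst : s ≤ t := hs.2
    have hc := hcv s hs0 hst
    rw [div_le_div_iff₀ ht0 hs0]
    have h2 := mul_le_mul_of_nonneg_left hc (le_of_lt ht0)
    have h3 : t * ((t - s) / t * g 0 + s / t * g t) = (t - s) * g 0 + s * g t := by
      field_simp
    rw [h3] at h2
    nlinarith
  have := (div_le_iff₀ ht0).1 key
  linarith

private lemma step_bound {n : ℕ} (ℓ u : Fin n → ℝ) (F : (Fin n → ℝ) → ℝ)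
    (hdiff : Differentiable ℝ F)
    (hconc : ∀ (i : Fin n), ∀ x ∈ Set.Icc ℓ u,
      ConcaveOn ℝ {t : ℝ | x + Pi.single i t ∈ Set.Icc ℓ u}
        (fun t : ℝ => F (x + Pi.single i t)))
    {w : Fin n → ℝ} (hw : w ∈ Set.Icc ℓ u) (j : Fin n) {t : ℝ} (ht : 0 ≤ t)
    (hwt : w + Pi.single j t ∈ Set.Icc ℓ u) :
    F (w + Pi.single j t) ≤ F w + t * fderiv ℝ F w (Pi.single j 1) := by
  rcases eq_or_lt_of_le ht with rfl | ht0
  · simp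
  · obtain ⟨G, hG⟩ : ∃ G : ℝ → ℝ, ∀ s, G s = F (w + Pi.single j s) :=
      ⟨fun s => F (w + Pi.single j s), fun s => rfl⟩
    have h0S : (0:ℝ) ∈ {s : ℝ | w + Pi.single j s ∈ Set.Icc ℓ u} := by
      simp only [Set.mem_setOf_eq, Pi.single_zero, add_zero]
      exact hw
    have htS : t ∈ {s : ℝ | w + Pi.single j s ∈ Set.Icc ℓ u} := hwt
    have hslope : Filter.Tendsto (fun s : ℝ => (G s - G 0) / s)
        (nhdsWithin 0 (Set.Ioi 0)) (nhds (fderiv ℝ F w (Pi.single j 1))) := by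
      simp only [hG]
      simpa using slope_to_deriv F hdiff w j
    have hcv : ∀ s : ℝ, 0 < s → s ≤ t →
        (t - s) / t * G 0 + s / t * G t ≤ G s := by
      intro s hs0 hst
      simp only [hG]
      have hc := (hconc j w hw).2 h0S htS
        (show (0:ℝ) ≤ (t - s) / t from div_nonneg (by linarith) (le_of_lt ht0))
        (show (0:ℝ) ≤ s / t from div_nonneg (le_of_lt hs0) (le_of_lt ht0))
        (by field_simp; ring)
      have hxeq : s / t * t = s := div_mul_cancel₀ s (ne_of_gt ht0)
      simpa [smul_eq_mul, hxeq] using hc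
    have hB := concave_bound ht0 hslope hcv
    rw [hG, hG] at hB
    simpa using hB

set_option maxHeartbeats 1000000 in
theorem stmt_6 {n : ℕ} (hn : 1 ≤ n) (ℓ u : Fin n → ℝ) (hlu : ∀ i, ℓ i < u i)
    (F : (Fin n → ℝ) → ℝ) (hdiff : Differentiable ℝ F)
    (hsub : ∀ x ∈ Set.Icc ℓ u, ∀ y ∈ Set.Icc ℓ u, F (x ⊔ y) + F (x ⊓ y) ≤ F x + F y)
    (hconc : ∀ (i : Fin n), ∀ x ∈ Set.Icc ℓ u,
      ConcaveOn ℝ {t : ℝ | x + Pi.single i t ∈ Set.Icc ℓ u}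
        (fun t : ℝ => F (x + Pi.single i t)))
    (hmono : ∀ x ∈ Set.Icc ℓ u, ∀ y ∈ Set.Icc ℓ u, x ≤ y → F x ≤ F y)
    (x : Fin n → ℝ) (hx : x ∈ Set.Icc ℓ u) (η : ℝ) :
    η ≤ F x ↔ ∀ xh ∈ Set.Icc ℓ u,
      η ≤ F xh + ∑ i : Fin n, fderiv ℝ F xh (Pi.single i 1) * max (x i - xh i) 0 := by
  constructor
  · intro hη xh hxh
    set y : ℕ → Fin n → ℝ := fun k i => if (i : ℕ) < k then max (xh i) (x i) else xh i with hy
    have yIcc : ∀ k, y k ∈ Set.Icc ℓ u := by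
      intro k
      constructor
      · intro i
        by_cases h : (i : ℕ) < k <;>
          simp only [hy, h, if_true, if_false, le_max_iff] <;>
          [left; skip] <;> exact hxh.1 i
      · intro i
        by_cases h : (i : ℕ) < k <;>
          simp only [hy, h, if_true, if_false, max_le_iff]
        · exact ⟨hxh.2 i, hx.2 i⟩
        · exact hxh.2 i
    have xhley : ∀ k, xh ≤ y k := by
      intro k i
      by_cases h : (i : ℕ) < k <;> simp [hy, h, le_max_left]
    have H : ∀ k, k ≤ n → F (y k) ≤ F xh +
        ∑ i : Fin n, (if (i : ℕ) < k then
          fderiv ℝ F xh (Pi.single i 1) * max (x i - xh i) 0 else 0) := by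
      intro k
      induction k with
      | zero =>
        intro _
        simp only [Nat.not_lt_zero, if_false, Finset.sum_const_zero, add_zero]
        have : y 0 = xh := by funext i; simp [hy]
        rw [this]
      | succ k ih =>
        intro hk1
        have hkn : k < n := hk1
        have ihk := ih (le_of_lt hkn)
        set j : Fin n := ⟨k, hkn⟩ with hj
        set f : Fin n → ℝ := fun i => fderiv ℝ F xh (Pi.single i 1) * max (x i - xh i) 0
          with hf
        have hsplit : ∑ i : Fin n, (if (i : ℕ) < k + 1 then f i else 0)
            = (∑ i : Fin n, (if (i : ℕ) < k then f i else 0)) + f j := by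
          have : ∀ i : Fin n, (if (i : ℕ) < k + 1 then f i else 0)
              = (if (i : ℕ) < k then f i else 0) + (if i = j then f i else 0) := by
            intro i
            by_cases h2 : i = j
            · subst h2
              simp [Nat.lt_irrefl, hj]
            · have hne : (i : ℕ) ≠ k := fun h => h2 (Fin.ext h)
              by_cases h1 : (i : ℕ) < k
              · simp [h1, h2, Nat.lt_succ_of_lt h1]
              · simp [h1, h2, show ¬((i : ℕ) < k + 1) by omega]
          rw [Finset.sum_congr rfl (fun i _ => this i), Finset.sum_add_distrib,
            Finset.sum_ite_eq' Finset.univ j f, if_pos (Finset.mem_univ j)]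
        rw [hsplit]
        by_cases hcase : x j ≤ xh j
        · have hyeq : y (k + 1) = y k := by
            funext i
            by_cases h2 : i = j
            · subst h2
              simp [hy, Nat.lt_irrefl, max_eq_left hcase]
            · have hne : (i : ℕ) ≠ k := fun h => h2 (Fin.ext h)
              by_cases h1 : (i : ℕ) < k
              · simp [hy, h1, Nat.lt_succ_of_lt h1]
              · simp [hy, h1, show ¬((i : ℕ) < k + 1) by omega]
          have hfj : f j = 0 := by
            simp [hf, max_eq_right (by linarith : x j - xh j ≤ 0)]
          rw [hyeq, hfj, add_zero]
          exact ihk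
        · push_neg at hcase
          set t : ℝ := x j - xh j with htdef
          have ht0 : 0 < t := by simp [htdef]; linarith
          have hykj : y k j = xh j := by simp [hy, hj, Nat.lt_irrefl]
          have hyeq : y (k + 1) = y k + Pi.single j t := by
            funext i
            by_cases h2 : i = j
            · subst h2
              simp only [Pi.add_apply, Pi.single_apply, if_pos rfl, hykj]
              simpa [hy, hj, Nat.lt_irrefl, max_eq_right (le_of_lt hcase), htdef] using le_of_lt hcase
            · have hne : (i : ℕ) ≠ k := fun h => h2 (Fin.ext h)
              by_cases h1 : (i : ℕ) < k
              · simp [hy, h1, Nat.lt_succ_of_lt h1, Pi.single_apply, h2]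
              · simp [hy, h1, show ¬((i : ℕ) < k + 1) by omega, Pi.single_apply, h2]
          have hy1Icc : y (k + 1) ∈ Set.Icc ℓ u := yIcc (k + 1)
          have h0S : (0:ℝ) ∈ {s : ℝ | y k + Pi.single j s ∈ Set.Icc ℓ u} := by
            simp only [Set.mem_setOf_eq, Pi.single_zero, add_zero]
            exact yIcc k
          have htS : t ∈ {s : ℝ | y k + Pi.single j s ∈ Set.Icc ℓ u} := by
            simp only [Set.mem_setOf_eq, ← hyeq]
            exact hy1Icc
          have hB := step_bound ℓ u F hdiff hconc (yIcc k) j (le_of_lt ht0) htS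
          rw [← hyeq] at hB
          have hA : fderiv ℝ F (y k) (Pi.single j 1) ≤ fderiv ℝ F xh (Pi.single j 1) :=
            grad_antitone ℓ u F hdiff hsub hxh (yIcc k) (xhley k) j hykj
              (lt_of_lt_of_le hcase (hx.2 j))
          have hfj : f j = fderiv ℝ F xh (Pi.single j 1) * t := by
            simp [hf, htdef, max_eq_left (le_of_lt (sub_pos.2 hcase))]
          have hmul : t * fderiv ℝ F (y k) (Pi.single j 1)
              ≤ t * fderiv ℝ F xh (Pi.single j 1) :=
            mul_le_mul_of_nonneg_left hA (le_of_lt ht0)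
          rw [hfj]
          have := mul_comm t (fderiv ℝ F xh (Pi.single j 1))
          linarith [ihk, hB, hmul]
    have hfin := H n (le_refl n)
    have hsum : ∑ i : Fin n, (if (i : ℕ) < n then
        fderiv ℝ F xh (Pi.single i 1) * max (x i - xh i) 0 else 0)
        = ∑ i : Fin n, fderiv ℝ F xh (Pi.single i 1) * max (x i - xh i) 0 :=
      Finset.sum_congr rfl (fun i _ => if_pos i.isLt)
    rw [hsum] at hfin
    have hxley : x ≤ y n := by
      intro i
      simp only [hy, i.isLt, if_true]
      exact le_sup_right
    have := hmono x hx (y n) (yIcc n) hxley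
    linarith
  · intro h
    have := h x hx
    simpa using this
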